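/- arXiv:1307.6865 — 5 statements merged into one kernel-verified Lean document; each statement's English description precedes it below -/
import Mathlib

section
/- (Proposition 1, part (iii), core computation) The normalized Wick double sum arising in Var(T_n) converges: lim_{n→∞} (1/n) Σ_{i=1}^{n-1} Σ_{j=1}^{n-1} ( E[e^{-α|t_{i+1}-t_j| - α|t_{j+1}-t_i|}] + E[e^{-α|t_{i+1}-t_{j+1}| - α|t_i-t_j|}] ) = 1 + g(2α) + 4 g(α)² (1 + K), where K = g(2α)/(1 - g(2α)); equivalently the limit equals 1 + g(2α) + 4g(α)²/(1 - g(2α)). Multiplied by η², this is the paper's asymptotic value of n·Var(T_n). -/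
open MeasureTheory ProbabilityTheory Real Set Filter

lemma aux_int_prod_exp {Ω : Type*} [MeasurableSpace Ω] (P : Measure Ω) [IsProbabilityMeasure P]
    (Δ : ℕ → Ω → ℝ) (hΔmeas : ∀ k, Measurable (Δ k))
    (hiid : iIndepFun Δ P)
    (c : ℕ → ℝ) (n : ℕ) :
    ∫ ω, ∏ k ∈ Finset.range n, Real.exp (-(c k * Δ k ω)) ∂P
      = ∏ k ∈ Finset.range n, ∫ ω, Real.exp (-(c k * Δ k ω)) ∂P := by
  have hYmeas : ∀ k, Measurable (fun ω => Real.exp (-(c k * Δ k ω))) :=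
    fun k => Real.measurable_exp.comp ((measurable_const.mul (hΔmeas k)).neg)
  have hYindep : iIndepFun
      (fun k ω => Real.exp (-(c k * Δ k ω))) P :=
    hiid.comp (fun k x => Real.exp (-(c k * x)))
      (fun k => Real.measurable_exp.comp ((measurable_id.const_mul (c k)).neg))
  induction n with
  | zero => simp
  | succ n ih =>
    simp only [Finset.prod_range_succ]
    have hX : Measurable (fun ω => ∏ k ∈ Finset.range n, Real.exp (-(c k * Δ k ω))) :=
      Finset.measurable_prod _ (fun i _ => hYmeas i)
    have hmul := (hYindep.indepFun_prod_range_succ hYmeas n).integral_mul_eq_mul_integral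
      (by simpa [Finset.prod_fn] using hX.aestronglyMeasurable)
      ((hYmeas n).aestronglyMeasurable)
    rw [show ((∏ j ∈ Finset.range n, fun ω => Real.exp (-(c j * Δ j ω))) * fun ω =>
        Real.exp (-(c n * Δ n ω))) = fun ω => (∏ k ∈ Finset.range n,
        Real.exp (-(c k * Δ k ω))) * Real.exp (-(c n * Δ n ω)) from
        funext fun ω => by simp [Finset.prod_apply]] at hmul
    rw [show (∏ j ∈ Finset.range n, fun ω => Real.exp (-(c j * Δ j ω))) = fun ω =>
        ∏ k ∈ Finset.range n, Real.exp (-(c k * Δ k ω)) from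
        funext fun ω => by simp [Finset.prod_apply]] at hmul
    rw [hmul, ih]

/-- Coefficient profile for the off-diagonal exponent. -/
noncomputable def cfun (α : ℝ) (i j : ℕ) (k : ℕ) : ℝ :=
  if k = i ∨ k = j then α else if i < k ∧ k < j then 2 * α else 0

set_option maxHeartbeats 1000000 in
/-- Proposition 1, part (iii), core computation: For renewal times
`t_i = Δ_1 + ⋯ + Δ_i` of an i.i.d. positive integrable sequence with Laplace transform
`g s = E[e^{-s Δ_1}]`, and `α > 0`,
`lim_{n→∞} (1/n) ∑_{i=1}^{n-1} ∑_{j=1}^{n-1}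
   (E[e^{-α|t_{i+1}-t_j| - α|t_{j+1}-t_i|}] + E[e^{-α|t_{i+1}-t_{j+1}| - α|t_i-t_j|}])
 = 1 + g(2α) + 4 g(α)² (1 + g(2α)/(1 - g(2α)))`.
(Here `Δ` is indexed from `0`, so `t i = ∑_{k<i} Δ k` is `Δ_1 + ⋯ + Δ_i`.) -/
theorem normalized_wick_double_sum_tendsto
    {Ω : Type*} [MeasurableSpace Ω] (P : Measure Ω) [IsProbabilityMeasure P]
    (α : ℝ) (hα : 0 < α)
    (Δ : ℕ → Ω → ℝ) (hΔmeas : ∀ k, Measurable (Δ k))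
    (hΔpos : ∀ k ω, 0 < Δ k ω) (hΔint : ∀ k, Integrable (Δ k) P)
    (hiid : iIndepFun Δ P)
    (hident : ∀ k, Measure.map (Δ k) P = Measure.map (Δ 0) P)
    (t : ℕ → Ω → ℝ) (ht : ∀ i ω, t i ω = ∑ k ∈ Finset.range i, Δ k ω)
    (g : ℝ → ℝ) (hg : ∀ s, g s = ∫ ω, Real.exp (-s * Δ 0 ω) ∂P) :
    Tendsto (fun n : ℕ => (1 / (n : ℝ)) *
        ∑ i ∈ Finset.Icc 1 (n - 1), ∑ j ∈ Finset.Icc 1 (n - 1),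
          ((∫ ω, Real.exp (-α * |t (i + 1) ω - t j ω| - α * |t (j + 1) ω - t i ω|) ∂P)
            + ∫ ω, Real.exp (-α * |t (i + 1) ω - t (j + 1) ω| - α * |t i ω - t j ω|) ∂P))
      atTop
      (nhds (1 + g (2 * α)
        + 4 * (g α) ^ 2 * (1 + g (2 * α) / (1 - g (2 * α))))) := by
    classical
  set q : ℝ := g (2 * α) with hqdef
  set G : ℝ := g α with hGdef
  -- Laplace transform of each Δ k
  have hlap : ∀ (k : ℕ) (s : ℝ), ∫ ω, Real.exp (-(s * Δ k ω)) ∂P = g s := by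
    intro k s
    have hm : Measurable fun x : ℝ => Real.exp (-(s * x)) :=
      Real.measurable_exp.comp ((measurable_id.const_mul s).neg)
    rw [hg s]
    have h1 : ∫ ω, Real.exp (-(s * Δ k ω)) ∂P
        = ∫ x, Real.exp (-(s * x)) ∂(P.map (Δ k)) :=
      (integral_map (hΔmeas k).aemeasurable hm.aestronglyMeasurable).symm
    rw [h1, hident k, integral_map (hΔmeas 0).aemeasurable hm.aestronglyMeasurable]
    simp only [neg_mul]
  have hexp : ∀ (k : ℕ) (s : ℝ), Measurable (fun ω => Real.exp (-(s * Δ k ω))) :=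
    fun k s => Real.measurable_exp.comp ((measurable_const.mul (hΔmeas k)).neg)
  have hint : ∀ (k : ℕ) (s : ℝ), 0 ≤ s → Integrable (fun ω => Real.exp (-(s * Δ k ω))) P := by
    intro k s hs
    refine Integrable.mono' (integrable_const 1) (hexp k s).aestronglyMeasurable
      (Filter.Eventually.of_forall fun ω => ?_)
    rw [Real.norm_eq_abs, abs_of_pos (Real.exp_pos _)]
    exact Real.exp_le_one_iff.mpr (by nlinarith [hΔpos k ω])
  have hq0 : 0 ≤ q := by
    rw [hqdef, ← hlap 0 (2 * α)]
    exact integral_nonneg fun ω => (Real.exp_pos _).le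
  have hq1 : q < 1 := by
    have hfint := hint 0 (2 * α) (by positivity)
    have hsub : ∫ ω, (1 - Real.exp (-(2 * α * Δ 0 ω))) ∂P = 1 - q := by
      rw [integral_sub (integrable_const 1) hfint, hlap 0 (2 * α)]
      simp [hqdef]
    have hib : Integrable (fun ω => 1 - Real.exp (-(2 * α * Δ 0 ω))) P :=
      (integrable_const 1).sub hfint
    have hnn : 0 ≤ (fun ω => 1 - Real.exp (-(2 * α * Δ 0 ω))) := by
      intro ω
      have := Real.exp_le_one_iff.mpr
        (by nlinarith [hΔpos 0 ω] : -(2 * α * Δ 0 ω) ≤ 0)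
      simp only [Pi.zero_apply]
      linarith
    have hpos : 0 < ∫ ω, (1 - Real.exp (-(2 * α * Δ 0 ω))) ∂P := by
      rw [integral_pos_iff_support_of_nonneg hnn hib]
      have hsupp : Function.support (fun ω => 1 - Real.exp (-(2 * α * Δ 0 ω))) = Set.univ := by
        ext ω
        simp only [Function.mem_support, Set.mem_univ, iff_true]
        have h1 : Real.exp (-(2 * α * Δ 0 ω)) < 1 :=
          Real.exp_lt_one_iff.mpr (by nlinarith [hΔpos 0 ω])
        intro h; rw [sub_eq_zero] at h; linarith [h1]
      rw [hsupp]
      simp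
    linarith
  have hqne : (1 : ℝ) - q ≠ 0 := by linarith
  -- absolute differences of renewal times
  have habs : ∀ (a b : ℕ) (ω : Ω), a ≤ b → |t b ω - t a ω| = ∑ k ∈ Finset.Ico a b, Δ k ω := by
    intro a b ω hab
    rw [ht, ht, ← Finset.sum_Ico_eq_sub _ hab]
    exact abs_of_nonneg (Finset.sum_nonneg fun k _ => (hΔpos k ω).le)
  -- diagonal terms
  have hdiagA : ∀ i : ℕ,
      ∫ ω, Real.exp (-α * |t (i + 1) ω - t i ω| - α * |t (i + 1) ω - t i ω|) ∂P = q := by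
    intro i
    have e : ∀ ω, -α * |t (i + 1) ω - t i ω| - α * |t (i + 1) ω - t i ω|
        = -(2 * α * Δ i ω) := by
      intro ω
      rw [habs i (i + 1) ω (Nat.le_succ i), Finset.sum_Ico_eq_sum_range]
      simp only [Nat.add_sub_cancel_left]
      rw [Finset.sum_range_one]
      ring
    rw [integral_congr_ae (Filter.Eventually.of_forall fun ω => by rw [e ω])]
    exact hlap i (2 * α)
  have hdiagB : ∀ i : ℕ,
      ∫ ω, Real.exp (-α * |t (i + 1) ω - t (i + 1) ω| - α * |t i ω - t i ω|) ∂P = 1 := by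
    intro i
    simp
  -- value of g at 0
  have hg0 : g 0 = 1 := by
    rw [hg 0]
    simp
  -- product of g over the coefficient profile
  have hprod_c : ∀ i j : ℕ, i < j →
      ∏ k ∈ Finset.range (j + 1), g (cfun α i j k) = G ^ 2 * q ^ (j - i - 1) := by
    intro i j hij
    rw [Finset.range_eq_Ico,
      ← Finset.prod_Ico_consecutive _ (Nat.zero_le i) (by omega : i ≤ j + 1)]
    have h1 : ∏ k ∈ Finset.Ico 0 i, g (cfun α i j k) = 1 :=
      Finset.prod_eq_one fun k hk => by
        have hk' := Finset.mem_Ico.mp hk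
        rw [show cfun α i j k = 0 from by
          unfold cfun; rw [if_neg (by omega), if_neg (by omega)], hg0]
    rw [h1, one_mul, Finset.prod_eq_prod_Ico_succ_bot (by omega : i < j + 1),
      Finset.prod_Ico_succ_top (by omega : i + 1 ≤ j)]
    have hci : cfun α i j i = α := by unfold cfun; rw [if_pos (Or.inl rfl)]
    have hcj : cfun α i j j = α := by unfold cfun; rw [if_pos (Or.inr rfl)]
    have hmid : ∏ k ∈ Finset.Ico (i + 1) j, g (cfun α i j k) = q ^ (j - i - 1) := by
      rw [Finset.prod_congr rfl (fun k hk => by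
        have hk' := Finset.mem_Ico.mp hk
        rw [show cfun α i j k = 2 * α from by
          unfold cfun; rw [if_neg (by omega), if_pos (by omega)]]),
        Finset.prod_const, Nat.card_Ico, hqdef,
        show j - (i + 1) = j - i - 1 from by omega]
    rw [hci, hcj, hmid]
    ring
  -- decomposition of the off-diagonal exponent as a coefficient sum
  have hsum_gen : ∀ (i j : ℕ) (s₁ s₂ : Finset ℕ), s₁ ⊆ Finset.range (j + 1) →
      s₂ ⊆ Finset.range (j + 1) →
      (∀ k, k < j + 1 → cfun α i j k = (if k ∈ s₁ then α else 0) + (if k ∈ s₂ then α else 0)) →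
      ∀ ω, α * (∑ k ∈ s₁, Δ k ω) + α * (∑ k ∈ s₂, Δ k ω)
        = ∑ k ∈ Finset.range (j + 1), cfun α i j k * Δ k ω := by
    intro i j s₁ s₂ h₁ h₂ hc ω
    have e : ∀ (s : Finset ℕ), s ⊆ Finset.range (j + 1) →
        α * ∑ k ∈ s, Δ k ω = ∑ k ∈ Finset.range (j + 1), (if k ∈ s then α else 0) * Δ k ω := by
      intro s hs
      rw [Finset.mul_sum,
        show (∑ k ∈ Finset.range (j + 1), (if k ∈ s then α else 0) * Δ k ω)
          = ∑ k ∈ Finset.range (j + 1), (if k ∈ s then α * Δ k ω else 0) from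
          Finset.sum_congr rfl fun k _ => by split_ifs <;> simp,
        Finset.sum_ite_mem, Finset.inter_eq_right.mpr hs]
    rw [e s₁ h₁, e s₂ h₂, ← Finset.sum_add_distrib]
    exact Finset.sum_congr rfl fun k hk => by
      rw [hc k (Finset.mem_range.mp hk)]; ring
  -- the off-diagonal integral computation
  have hoff_main : ∀ (i j : ℕ), i < j → ∀ (s₁ s₂ : Finset ℕ), s₁ ⊆ Finset.range (j + 1) →
      s₂ ⊆ Finset.range (j + 1) →
      (∀ k, k < j + 1 → cfun α i j k = (if k ∈ s₁ then α else 0) + (if k ∈ s₂ then α else 0)) →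
      ∫ ω, Real.exp (-α * (∑ k ∈ s₁, Δ k ω) - α * (∑ k ∈ s₂, Δ k ω)) ∂P
        = G ^ 2 * q ^ (j - i - 1) := by
    intro i j hij s₁ s₂ h₁ h₂ hc
    have e1 : ∀ ω, Real.exp (-α * (∑ k ∈ s₁, Δ k ω) - α * (∑ k ∈ s₂, Δ k ω))
        = ∏ k ∈ Finset.range (j + 1), Real.exp (-(cfun α i j k * Δ k ω)) := by
      intro ω
      rw [← Real.exp_sum]
      congr 1
      rw [Finset.sum_neg_distrib, ← hsum_gen i j s₁ s₂ h₁ h₂ hc ω]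
      ring
    rw [integral_congr_ae (Filter.Eventually.of_forall e1),
      aux_int_prod_exp P Δ hΔmeas hiid _ _,
      Finset.prod_congr rfl (fun k _ => hlap k (cfun α i j k))]
    exact hprod_c i j hij
  -- the two off-diagonal integrals
  have hA : ∀ i j : ℕ, i < j →
      ∫ ω, Real.exp (-α * |t (i + 1) ω - t j ω| - α * |t (j + 1) ω - t i ω|) ∂P
        = G ^ 2 * q ^ (j - i - 1) := by
    intro i j hij
    have e : ∀ ω, -α * |t (i + 1) ω - t j ω| - α * |t (j + 1) ω - t i ω|
        = -α * (∑ k ∈ Finset.Ico (i + 1) j, Δ k ω)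
          - α * (∑ k ∈ Finset.Ico i (j + 1), Δ k ω) := by
      intro ω
      rw [abs_sub_comm (t (i + 1) ω), habs (i + 1) j ω hij, habs i (j + 1) ω (by omega)]
    rw [integral_congr_ae (Filter.Eventually.of_forall fun ω => by rw [e ω])]
    refine hoff_main i j hij _ _ ?_ ?_ ?_
    · intro k hk; rw [Finset.mem_range]; have := Finset.mem_Ico.mp hk; omega
    · intro k hk; rw [Finset.mem_range]; have := Finset.mem_Ico.mp hk; omega
    · intro k hk
      simp only [Finset.mem_Ico]
      unfold cfun
      by_cases h2 : k = i
      · subst h2; rw [if_pos (Or.inl rfl), if_neg (by omega), if_pos (by omega)]; ring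
      by_cases h3 : k = j
      · subst h3; rw [if_pos (Or.inr rfl), if_neg (by omega), if_pos (by omega)]; ring
      by_cases h4 : i < k ∧ k < j
      · rw [if_neg (by omega), if_pos h4, if_pos (by omega), if_pos (by omega)]; ring
      · rw [if_neg (by omega), if_neg h4, if_neg (by omega), if_neg (by omega)]; ring
  have hB : ∀ i j : ℕ, i < j →
      ∫ ω, Real.exp (-α * |t (i + 1) ω - t (j + 1) ω| - α * |t i ω - t j ω|) ∂P
        = G ^ 2 * q ^ (j - i - 1) := by
    intro i j hij
    have e : ∀ ω, -α * |t (i + 1) ω - t (j + 1) ω| - α * |t i ω - t j ω|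
        = -α * (∑ k ∈ Finset.Ico (i + 1) (j + 1), Δ k ω)
          - α * (∑ k ∈ Finset.Ico i j, Δ k ω) := by
      intro ω
      rw [abs_sub_comm (t (i + 1) ω), habs (i + 1) (j + 1) ω (by omega),
        abs_sub_comm (t i ω), habs i j ω (by omega)]
    rw [integral_congr_ae (Filter.Eventually.of_forall fun ω => by rw [e ω])]
    refine hoff_main i j hij _ _ ?_ ?_ ?_
    · intro k hk; rw [Finset.mem_range]; have := Finset.mem_Ico.mp hk; omega
    · intro k hk; rw [Finset.mem_range]; have := Finset.mem_Ico.mp hk; omega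
    · intro k hk
      simp only [Finset.mem_Ico]
      unfold cfun
      by_cases h2 : k = i
      · subst h2; rw [if_pos (Or.inl rfl), if_neg (by omega), if_pos (by omega)]; ring
      by_cases h3 : k = j
      · subst h3; rw [if_pos (Or.inr rfl), if_pos (by omega), if_neg (by omega)]; ring
      by_cases h4 : i < k ∧ k < j
      · rw [if_neg (by omega), if_pos h4, if_pos (by omega), if_pos (by omega)]; ring
      · rw [if_neg (by omega), if_neg h4, if_neg (by omega), if_neg (by omega)]; ring
  -- abbreviate the summand
  set F : ℕ → ℕ → ℝ := fun i j =>
      ((∫ ω, Real.exp (-α * |t (i + 1) ω - t j ω| - α * |t (j + 1) ω - t i ω|) ∂P)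
        + ∫ ω, Real.exp (-α * |t (i + 1) ω - t (j + 1) ω| - α * |t i ω - t j ω|) ∂P) with hF
  have hFsym : ∀ i j : ℕ, F i j = F j i := by
    intro i j
    simp only [hF]
    congr 1
    · refine integral_congr_ae (Filter.Eventually.of_forall fun ω => ?_)
      exact congrArg Real.exp (by ring)
    · refine integral_congr_ae (Filter.Eventually.of_forall fun ω => ?_)
      exact congrArg Real.exp (by
        rw [abs_sub_comm (t (i + 1) ω), abs_sub_comm (t i ω)])
  have hFdiag : ∀ i : ℕ, F i i = 1 + q := by
    intro i
    simp only [hF]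
    rw [hdiagA i, hdiagB i]
    ring
  have hFoff : ∀ i j : ℕ, i < j → F i j = 2 * G ^ 2 * q ^ (j - i - 1) := by
    intro i j hij
    simp only [hF]
    rw [hA i j hij, hB i j hij]
    ring
  -- the double sum
  set S : ℕ → ℝ := fun n =>
      ∑ i ∈ Finset.Icc 1 (n - 1), ∑ j ∈ Finset.Icc 1 (n - 1), F i j with hSdef
  have hS0 : S 0 = 0 := by
    simp only [hSdef]
    rw [show (0 : ℕ) - 1 = 0 from rfl, Finset.Icc_eq_empty (by omega)]
    simp
  have hstep : ∀ n : ℕ, 1 ≤ n →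
      S (n + 1) - S n = (1 + q) + 4 * G ^ 2 * ∑ m ∈ Finset.range (n - 1), q ^ m := by
    intro n hn
    have hnot : n ∉ Finset.Icc 1 (n - 1) := by
      simp only [Finset.mem_Icc]; omega
    have hins : Finset.Icc 1 n = insert n (Finset.Icc 1 (n - 1)) := by
      ext x
      simp only [Finset.mem_Icc, Finset.mem_insert]
      omega
    have e1 : S (n + 1) = F n n + (∑ j ∈ Finset.Icc 1 (n - 1), F n j)
        + ((∑ i ∈ Finset.Icc 1 (n - 1), F i n) + S n) := by
      simp only [hSdef, Nat.add_sub_cancel, hins, Finset.sum_insert hnot,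
        Finset.sum_add_distrib]
      try ring
    have e2 : ∑ j ∈ Finset.Icc 1 (n - 1), F n j = ∑ j ∈ Finset.Icc 1 (n - 1), F j n :=
      Finset.sum_congr rfl fun j _ => hFsym n j
    have e3 : ∑ j ∈ Finset.Icc 1 (n - 1), F j n
        = 2 * G ^ 2 * ∑ m ∈ Finset.range (n - 1), q ^ m := by
      rw [Finset.sum_congr rfl (fun j hj => hFoff j n
          (by have := Finset.mem_Icc.mp hj; omega)), ← Finset.mul_sum]
      congr 1
      refine Finset.sum_nbij' (i := fun j => n - 1 - j) (j := fun m => n - 1 - m)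
        ?_ ?_ ?_ ?_ ?_
      · intro a ha
        have := Finset.mem_Icc.mp ha
        simp only [Finset.mem_range]
        omega
      · intro a ha
        have := Finset.mem_range.mp ha
        simp only [Finset.mem_Icc]
        omega
      · intro a ha
        have := Finset.mem_Icc.mp ha
        show n - 1 - (n - 1 - a) = a
        omega
      · intro a ha
        have := Finset.mem_range.mp ha
        show n - 1 - (n - 1 - a) = a
        omega
      · intro a ha
        have := Finset.mem_Icc.mp ha
        show q ^ (n - a - 1) = q ^ (n - 1 - a)
        rw [show n - a - 1 = n - 1 - a from by omega]
    rw [e1, hFdiag n, e2, e3]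
    ring
  have htel : ∀ n : ℕ, ∑ k ∈ Finset.range n, (S (k + 1) - S k) = S n := by
    intro n
    rw [Finset.sum_range_sub S n, hS0, sub_zero]
  have hgeom : Tendsto (fun n : ℕ => ∑ m ∈ Finset.range (n - 1), q ^ m) atTop
      (nhds (1 - q)⁻¹) :=
    ((hasSum_geometric_of_lt_one hq0 hq1).tendsto_sum_nat).comp (tendsto_sub_atTop_nat 1)
  have hulim : Tendsto (fun n : ℕ => S (n + 1) - S n) atTop
      (nhds ((1 + q) + 4 * G ^ 2 * (1 - q)⁻¹)) := by
    refine Tendsto.congr' ?_ (tendsto_const_nhds.add (tendsto_const_nhds.mul hgeom))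
    filter_upwards [Filter.eventually_ge_atTop 1] with n hn
    exact (hstep n hn).symm
  have key : Tendsto (fun n : ℕ => (1 / (n : ℝ)) * S n) atTop
      (nhds ((1 + q) + 4 * G ^ 2 * (1 - q)⁻¹)) := by
    refine hulim.cesaro.congr fun n => ?_
    show (n : ℝ)⁻¹ * ∑ k ∈ Finset.range n, (S (k + 1) - S k) = 1 / (n : ℝ) * S n
    rw [htel n, one_div]
  have hconst : (1 + q + 4 * G ^ 2 * (1 + q / (1 - q)))
      = (1 + q) + 4 * G ^ 2 * (1 - q)⁻¹ := by
    field_simp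
    try ring
  rw [hconst]
  exact key
end

section
/- (Proposition 1, part (iv), core computation) The normalized double sum arising in Var(V_n) converges: lim_{n→∞} (2/n) Σ_{i=1}^{n} Σ_{j=1}^{n} E[e^{-2α|t_i-t_j|}] = 2 + 4K, where K = g(2α)/(1 - g(2α)); equivalently the limit equals 2(1 + g(2α))/(1 - g(2α)). Multiplied by η², this is the paper's asymptotic value of n·Var(V_n). -/
open MeasureTheory ProbabilityTheory Real Set Filter

/-- Analytic core: the normalized double geometric sum converges. -/
lemma aux_geom_double_sum {q : ℝ} (hq0 : 0 ≤ q) (hq1 : q < 1) :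
    Tendsto (fun n : ℕ => (2 / (n : ℝ)) *
        ∑ i ∈ Finset.range n, ∑ j ∈ Finset.range n, q ^ (Nat.dist i j))
      atTop (nhds (2 + 4 * (q / (1 - q)))) := by
  set c : ℕ → ℝ := fun m => ∑ i ∈ Finset.range m, q ^ (i + 1) with hc
  have hT : ∀ n : ℕ, (∑ i ∈ Finset.range n, ∑ j ∈ Finset.range n, q ^ (Nat.dist i j))
      = n + 2 * ∑ m ∈ Finset.range n, c m := by
    intro n
    induction n with
    | zero => simp
    | succ n ih =>
      have hrow : ∀ m : ℕ, (∑ j ∈ Finset.range m, q ^ (Nat.dist m j)) = c m := by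
        intro m
        rw [hc]
        rw [← Finset.sum_range_reflect (fun j => q ^ (Nat.dist m j)) m]
        refine Finset.sum_congr rfl fun j hj => ?_
        have hj' : j < m := Finset.mem_range.mp hj
        have : Nat.dist m (m - 1 - j) = j + 1 := by
          rw [Nat.dist_eq_sub_of_le_right (by omega)]
          omega
        rw [this]
      have hstep : ∀ i : ℕ, (∑ j ∈ Finset.range (n + 1), q ^ (Nat.dist i j))
          = (∑ j ∈ Finset.range n, q ^ (Nat.dist i j)) + q ^ (Nat.dist i n) :=
        fun i => Finset.sum_range_succ _ _
      rw [Finset.sum_range_succ]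
      simp only [hstep]
      rw [Finset.sum_add_distrib, ih]
      have h1 : (∑ i ∈ Finset.range n, q ^ (Nat.dist i n)) = c n := by
        rw [← hrow n]
        exact Finset.sum_congr rfl fun i _ => by rw [Nat.dist_comm]
      have h2 : (∑ j ∈ Finset.range n, q ^ (Nat.dist n j)) = c n := hrow n
      rw [h1, h2, Nat.dist_self, pow_zero, Finset.sum_range_succ]
      push_cast
      ring
  have hclim : Tendsto c atTop (nhds (q / (1 - q))) := by
    have hgeo : Tendsto (fun m : ℕ => ∑ i ∈ Finset.range m, q ^ i) atTop (nhds (1 - q)⁻¹) :=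
      (hasSum_geometric_of_lt_one hq0 hq1).tendsto_sum_nat
    have : Tendsto (fun m : ℕ => q * ∑ i ∈ Finset.range m, q ^ i) atTop
        (nhds (q * (1 - q)⁻¹)) := hgeo.const_mul q
    simpa [hc, Finset.mul_sum, pow_succ, mul_comm, div_eq_mul_inv] using this
  have hces : Tendsto (fun n : ℕ => (n : ℝ)⁻¹ * ∑ m ∈ Finset.range n, c m) atTop
      (nhds (q / (1 - q))) := hclim.cesaro
  have hfin : Tendsto (fun n : ℕ => 2 + 4 * ((n : ℝ)⁻¹ * ∑ m ∈ Finset.range n, c m)) atTop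
      (nhds (2 + 4 * (q / (1 - q)))) := (hces.const_mul 4).const_add 2
  refine hfin.congr' ?_
  filter_upwards [eventually_ge_atTop 1] with n hn
  have hn0 : (n : ℝ) ≠ 0 := by positivity
  rw [hT n]
  field_simp
  ring

/-- Proposition 1, part (iv), core computation: For renewal times
`t_i = Δ_1 + ⋯ + Δ_i` of an i.i.d. positive integrable sequence with Laplace transform
`g s = E[e^{-s Δ_1}]`, and `α > 0`,
`lim_{n→∞} (2/n) ∑_{i=1}^{n} ∑_{j=1}^{n} E[e^{-2α|t_i-t_j|}] = 2 + 4K`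
where `K = g(2α)/(1 - g(2α))`.
(Here `Δ` is indexed from `0`, so `t i = ∑_{k<i} Δ k` is `Δ_1 + ⋯ + Δ_i`.) -/
theorem normalized_double_sum_varV_tendsto
    {Ω : Type*} [MeasurableSpace Ω] (P : Measure Ω) [IsProbabilityMeasure P]
    (α : ℝ) (hα : 0 < α)
    (Δ : ℕ → Ω → ℝ) (hΔmeas : ∀ k, Measurable (Δ k))
    (hΔpos : ∀ k ω, 0 < Δ k ω) (hΔint : ∀ k, Integrable (Δ k) P)
    (hiid : iIndepFun Δ P)
    (hident : ∀ k, Measure.map (Δ k) P = Measure.map (Δ 0) P)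
    (t : ℕ → Ω → ℝ) (ht : ∀ i ω, t i ω = ∑ k ∈ Finset.range i, Δ k ω)
    (g : ℝ → ℝ) (hg : ∀ s, g s = ∫ ω, Real.exp (-s * Δ 0 ω) ∂P) :
    Tendsto (fun n : ℕ => (2 / (n : ℝ)) *
        ∑ i ∈ Finset.Icc 1 n, ∑ j ∈ Finset.Icc 1 n,
          ∫ ω, Real.exp (-(2 * α) * |t i ω - t j ω|) ∂P)
      atTop
      (nhds (2 + 4 * (g (2 * α) / (1 - g (2 * α))))) := by
  set q : ℝ := g (2 * α) with hqdef
  have hgq : q = ∫ ω, Real.exp (-(2 * α) * Δ 0 ω) ∂P := hg (2 * α)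
  -- integrability and bounds for exp(-(2α)Δ k)
  have hexpmeas : ∀ k, Measurable (fun ω => Real.exp (-(2 * α) * Δ k ω)) :=
    fun k => ((hΔmeas k).const_mul _).exp
  have hexpint : ∀ k, Integrable (fun ω => Real.exp (-(2 * α) * Δ k ω)) P := by
    intro k
    refine (integrable_const (1 : ℝ)).mono' (hexpmeas k).aestronglyMeasurable ?_
    filter_upwards with ω
    rw [Real.norm_eq_abs, abs_of_pos (Real.exp_pos _)]
    refine (Real.exp_lt_one_iff.mpr ?_).le
    have := hΔpos k ω
    nlinarith
  have hq0 : 0 ≤ q := by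
    rw [hgq]
    exact integral_nonneg fun ω => (Real.exp_pos _).le
  have hq1 : q < 1 := by
    have hpos : 0 < ∫ ω, (1 - Real.exp (-(2 * α) * Δ 0 ω)) ∂P := by
      rw [integral_pos_iff_support_of_nonneg_ae]
      · have : Function.support (fun ω => 1 - Real.exp (-(2 * α) * Δ 0 ω)) = Set.univ := by
          ext ω
          simp only [Function.mem_support, Set.mem_univ, iff_true]
          have h1 : Real.exp (-(2 * α) * Δ 0 ω) < 1 := by
            refine Real.exp_lt_one_iff.mpr ?_
            have := hΔpos 0 ω
            nlinarith
          intro h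
          nlinarith [h1]
        rw [this]
        simp
      · filter_upwards with ω
        have h1 : Real.exp (-(2 * α) * Δ 0 ω) < 1 := by
          refine Real.exp_lt_one_iff.mpr ?_
          have := hΔpos 0 ω
          nlinarith
        simp only [Pi.zero_apply]
        linarith
      · exact (integrable_const 1).sub (hexpint 0)
    rw [integral_sub (integrable_const 1) (hexpint 0), integral_const] at hpos
    simp only [measure_univ, ENNReal.toReal_one, smul_eq_mul, one_mul, probReal_univ] at hpos
    rw [hgq]
    linarith
  -- each mgf equals q
  have hmgf : ∀ k, (∫ ω, Real.exp (-(2 * α) * Δ k ω) ∂P) = q := by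
    intro k
    have hcont : AEStronglyMeasurable (fun x : ℝ => Real.exp (-(2 * α) * x))
        (Measure.map (Δ k) P) := (Real.continuous_exp.comp (continuous_const.mul
          continuous_id)).aestronglyMeasurable
    have hcont0 : AEStronglyMeasurable (fun x : ℝ => Real.exp (-(2 * α) * x))
        (Measure.map (Δ 0) P) := (Real.continuous_exp.comp (continuous_const.mul
          continuous_id)).aestronglyMeasurable
    rw [hgq,
      ← integral_map (hΔmeas k).aemeasurable hcont,
      ← integral_map (hΔmeas 0).aemeasurable hcont0, hident k]
  -- per-term computation
  have hterm : ∀ i j : ℕ, (∫ ω, Real.exp (-(2 * α) * |t i ω - t j ω|) ∂P)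
      = q ^ (Nat.dist i j) := by
    have key : ∀ i j : ℕ, j ≤ i → (∫ ω, Real.exp (-(2 * α) * |t i ω - t j ω|) ∂P)
        = q ^ (i - j) := by
      intro i j hji
      have habs : ∀ ω, |t i ω - t j ω| = (∑ k ∈ Finset.Ico j i, Δ k) ω := by
        intro ω
        have hsum : t i ω - t j ω = ∑ k ∈ Finset.Ico j i, Δ k ω := by
          rw [ht i ω, ht j ω, Finset.sum_Ico_eq_sub _ hji]
        rw [hsum, Finset.sum_apply]
        exact abs_of_nonneg (Finset.sum_nonneg fun k _ => (hΔpos k ω).le)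
      have hmgfsum := hiid.mgf_sum hΔmeas (t := -(2 * α)) (Finset.Ico j i)
      have heq : (∫ ω, Real.exp (-(2 * α) * |t i ω - t j ω|) ∂P)
          = mgf (∑ k ∈ Finset.Ico j i, Δ k) P (-(2 * α)) := by
        unfold mgf
        exact integral_congr_ae (Filter.Eventually.of_forall fun ω => by simp only [habs ω])
      rw [heq, hmgfsum]
      have : ∀ k ∈ Finset.Ico j i, mgf (Δ k) P (-(2 * α)) = q := by
        intro k _
        unfold mgf
        exact hmgf k
      rw [Finset.prod_congr rfl this, Finset.prod_const, Nat.card_Ico]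
    intro i j
    rcases le_total j i with h | h
    · rw [key i j h, Nat.dist_eq_sub_of_le_right h]
    · have : (∫ ω, Real.exp (-(2 * α) * |t i ω - t j ω|) ∂P)
          = ∫ ω, Real.exp (-(2 * α) * |t j ω - t i ω|) ∂P := by
        refine integral_congr_ae (Filter.Eventually.of_forall fun ω => ?_)
        simp only [abs_sub_comm (t i ω) (t j ω)]
      rw [this, key j i h, Nat.dist_eq_sub_of_le h]
  -- reduce to the analytic lemma
  have hsum : ∀ n : ℕ, (∑ i ∈ Finset.Icc 1 n, ∑ j ∈ Finset.Icc 1 n,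
        ∫ ω, Real.exp (-(2 * α) * |t i ω - t j ω|) ∂P)
      = ∑ i ∈ Finset.range n, ∑ j ∈ Finset.range n, q ^ (Nat.dist i j) := by
    intro n
    have hIcc : Finset.Icc 1 n = Finset.Ico 1 (n + 1) := by
      rw [Finset.Ico_add_one_right_eq_Icc]
    rw [hIcc]
    rw [Finset.sum_Ico_eq_sum_range]
    simp only [Nat.add_sub_cancel]
    refine Finset.sum_congr rfl fun i _ => ?_
    rw [Finset.sum_Ico_eq_sum_range]
    simp only [Nat.add_sub_cancel]
    refine Finset.sum_congr rfl fun j _ => ?_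
    rw [hterm (1 + i) (1 + j), Nat.dist_add_add_left]
  have := aux_geom_double_sum hq0 hq1
  refine this.congr fun n => ?_
  rw [hsum n]
end

section
/- (Proposition 1, part (v), core computation) The normalized double sum arising in Cov(T_n, V_n) converges: lim_{n→∞} (2/n) Σ_{i=1}^{n-1} Σ_{j=1}^{n} E[e^{-α|t_{i+1}-t_j| - α|t_i-t_j|}] = 4 g(α) + 4 g(α) K, where K = g(2α)/(1 - g(2α)); equivalently the limit equals 4g(α)/(1 - g(2α)). Multiplied by η², this is the paper's asymptotic value of n·Cov(T_n, V_n). -/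
open MeasureTheory ProbabilityTheory Real Set Filter

lemma expProdAux {Ω : Type*} [MeasurableSpace Ω] (P : Measure Ω) [IsProbabilityMeasure P]
    (Δ : ℕ → Ω → ℝ) (hΔmeas : ∀ k, Measurable (Δ k))
    (hΔpos : ∀ k ω, 0 < Δ k ω)
    (hiid : iIndepFun Δ P)
    (c : ℕ → ℝ) (hc : ∀ k, 0 ≤ c k) (S : Finset ℕ) :
    ∫ ω, ∏ k ∈ S, Real.exp (-(c k) * Δ k ω) ∂P
      = ∏ k ∈ S, ∫ ω, Real.exp (-(c k) * Δ k ω) ∂P := by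
  have hFmeas : ∀ k, Measurable (fun ω => Real.exp (-(c k) * Δ k ω)) :=
    fun k => ((hΔmeas k).const_mul (-(c k))).exp
  have hle1 : ∀ k ω, Real.exp (-(c k) * Δ k ω) ≤ 1 := by
    intro k ω
    rw [Real.exp_le_one_iff]
    have h1 := hc k
    have h2 := (hΔpos k ω).le
    nlinarith
  have hFint : ∀ k, Integrable (fun ω => Real.exp (-(c k) * Δ k ω)) P := by
    intro k
    refine (integrable_const (1:ℝ)).mono' (hFmeas k).aestronglyMeasurable ?_
    filter_upwards with ω
    rw [Real.norm_eq_abs, abs_of_pos (Real.exp_pos _)]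
    exact hle1 k ω
  have hFindep : iIndepFun
      (fun k ω => Real.exp (-(c k) * Δ k ω)) P :=
    hiid.comp (fun k (x : ℝ) => Real.exp (-(c k) * x))
      (fun k => (measurable_id.const_mul (-(c k))).exp)
  classical
  induction S using Finset.induction_on with
  | empty => simp
  | insert i S hiS ih =>
    have hPmeas : Measurable (fun ω => ∏ k ∈ S, Real.exp (-(c k) * Δ k ω)) :=
      Finset.measurable_prod S (fun k _ => hFmeas k)
    have hPint : Integrable (fun ω => ∏ k ∈ S, Real.exp (-(c k) * Δ k ω)) P := by
      refine (integrable_const (1:ℝ)).mono' hPmeas.aestronglyMeasurable ?_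
      filter_upwards with ω
      rw [Real.norm_eq_abs, abs_of_nonneg (Finset.prod_nonneg (fun k _ => (Real.exp_pos _).le))]
      exact Finset.prod_le_one (fun k _ => (Real.exp_pos _).le) (fun k _ => hle1 k ω)
    have hindep : IndepFun (fun ω => ∏ k ∈ S, Real.exp (-(c k) * Δ k ω))
        (fun ω => Real.exp (-(c i) * Δ i ω)) P := by
      have h := hFindep.indepFun_finsetProd_of_notMem
        (fun k => ((hΔmeas k).const_mul (-(c k))).exp) hiS
      have heq : (∏ j ∈ S, fun ω => Real.exp (-(c j) * Δ j ω))
          = fun ω => ∏ k ∈ S, Real.exp (-(c k) * Δ k ω) := by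
        funext ω; exact Finset.prod_apply ω S _
      rwa [heq] at h
    simp only [Finset.prod_insert hiS]
    rw [← ih]
    have : ∫ ω, (Real.exp (-(c i) * Δ i ω) * ∏ k ∈ S, Real.exp (-(c k) * Δ k ω)) ∂P
        = ∫ ω, ((fun ω => ∏ k ∈ S, Real.exp (-(c k) * Δ k ω)) ω
            * (fun ω => Real.exp (-(c i) * Δ i ω)) ω) ∂P := by
      congr 1; ext ω; ring
    rw [this]
    exact (hindep.integral_fun_mul_eq_mul_integral hPint.aestronglyMeasurable (hFint i).aestronglyMeasurable).trans (mul_comm _ _)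
/-- Proposition 1, part (v), core computation: For renewal times
`t_i = Δ_1 + ⋯ + Δ_i` of an i.i.d. positive integrable sequence with Laplace transform
`g s = E[e^{-s Δ_1}]`, and `α > 0`,
`lim_{n→∞} (2/n) ∑_{i=1}^{n-1} ∑_{j=1}^{n} E[e^{-α|t_{i+1}-t_j| - α|t_i-t_j|}]
  = 4 g(α) + 4 g(α) K` where `K = g(2α)/(1 - g(2α))`.
(Here `Δ` is indexed from `0`, so `t i = ∑_{k<i} Δ k` is `Δ_1 + ⋯ + Δ_i`.) -/
theorem normalized_double_sum_covTV_tendsto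
    {Ω : Type*} [MeasurableSpace Ω] (P : Measure Ω) [IsProbabilityMeasure P]
    (α : ℝ) (hα : 0 < α)
    (Δ : ℕ → Ω → ℝ) (hΔmeas : ∀ k, Measurable (Δ k))
    (hΔpos : ∀ k ω, 0 < Δ k ω) (hΔint : ∀ k, Integrable (Δ k) P)
    (hiid : iIndepFun Δ P)
    (hident : ∀ k, Measure.map (Δ k) P = Measure.map (Δ 0) P)
    (t : ℕ → Ω → ℝ) (ht : ∀ i ω, t i ω = ∑ k ∈ Finset.range i, Δ k ω)
    (g : ℝ → ℝ) (hg : ∀ s, g s = ∫ ω, Real.exp (-s * Δ 0 ω) ∂P) :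
    Tendsto (fun n : ℕ => (2 / (n : ℝ)) *
        ∑ i ∈ Finset.Icc 1 (n - 1), ∑ j ∈ Finset.Icc 1 n,
          ∫ ω, Real.exp (-α * |t (i + 1) ω - t j ω| - α * |t i ω - t j ω|) ∂P)
      atTop
      (nhds (4 * g α + 4 * g α * (g (2 * α) / (1 - g (2 * α))))) := by
  classical
  have hcont : ∀ c : ℝ, Measurable (fun x : ℝ => Real.exp (-c * x)) :=
    fun c => (measurable_id.const_mul (-c)).exp
  have hident' : ∀ (k : ℕ) (c : ℝ), ∫ ω, Real.exp (-c * Δ k ω) ∂P = g c := by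
    intro k c
    rw [hg c]
    have h1 : ∫ ω, Real.exp (-c * Δ k ω) ∂P
        = ∫ x, Real.exp (-c * x) ∂(P.map (Δ k)) :=
      (integral_map (hΔmeas k).aemeasurable (hcont c).aestronglyMeasurable).symm
    have h2 : ∫ ω, Real.exp (-c * Δ 0 ω) ∂P
        = ∫ x, Real.exp (-c * x) ∂(P.map (Δ 0)) :=
      (integral_map (hΔmeas 0).aemeasurable (hcont c).aestronglyMeasurable).symm
    rw [h1, h2, hident k]
  have key : ∀ i j : ℕ,
      ∫ ω, Real.exp (-α * |t (i+1) ω - t j ω| - α * |t i ω - t j ω|) ∂P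
        = g α * (g (2*α)) ^ (if j ≤ i then i - j else j - i - 1) := by
    intro i j
    set S : Finset ℕ := if j ≤ i then Finset.Ico j i else Finset.Ico (i+1) j with hS
    have hiS : i ∉ S := by
      by_cases h : j ≤ i <;> simp only [hS, if_pos, if_neg, h, ite_true, ite_false] <;>
        simp [Finset.mem_Ico] <;> omega
    set c : ℕ → ℝ := fun k => if k = i then α else 2*α with hc
    have hc0 : ∀ k, 0 ≤ c k := by
      intro k; by_cases h : k = i <;> simp only [hc, h, ite_true, ite_false] <;> linarith
    have hpt : ∀ ω, Real.exp (-α * |t (i+1) ω - t j ω| - α * |t i ω - t j ω|)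
        = ∏ k ∈ insert i S, Real.exp (-(c k) * Δ k ω) := by
      intro ω
      have hprod : ∏ k ∈ insert i S, Real.exp (-(c k) * Δ k ω)
          = Real.exp (-α * Δ i ω) * ∏ k ∈ S, Real.exp (-(2*α) * Δ k ω) := by
        rw [Finset.prod_insert hiS]
        congr 1
        · simp [hc]
        · refine Finset.prod_congr rfl fun k hk => ?_
          have hki : k ≠ i := by rintro rfl; exact hiS hk
          simp [hc, hki]
      rw [hprod, ← Real.exp_sum, ← Real.exp_add]
      congr 1
      by_cases hji : j ≤ i
      · have hSe : S = Finset.Ico j i := by rw [hS, if_pos hji]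
        have hA : t (i+1) ω - t j ω = ∑ k ∈ Finset.Ico j (i+1), Δ k ω := by
          rw [ht, ht, Finset.sum_Ico_eq_sub _ (by omega)]
        have hB : t i ω - t j ω = ∑ k ∈ Finset.Ico j i, Δ k ω := by
          rw [ht, ht, Finset.sum_Ico_eq_sub _ hji]
        rw [hA, hB, abs_of_nonneg (Finset.sum_nonneg fun k _ => (hΔpos k ω).le),
          abs_of_nonneg (Finset.sum_nonneg fun k _ => (hΔpos k ω).le),
          Finset.sum_Ico_succ_top hji, hSe]
        have : ∑ k ∈ Finset.Ico j i, -(2*α) * Δ k ω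
            = -(2*α) * ∑ k ∈ Finset.Ico j i, Δ k ω := by rw [Finset.mul_sum]
        rw [this]; ring
      · have hij : i < j := by omega
        have hSe : S = Finset.Ico (i+1) j := by rw [hS, if_neg hji]
        have hA : t (i+1) ω - t j ω = -(∑ k ∈ Finset.Ico (i+1) j, Δ k ω) := by
          rw [ht, ht, Finset.sum_Ico_eq_sub _ (by omega : i+1 ≤ j)]; ring
        have hB : t i ω - t j ω = -(∑ k ∈ Finset.Ico i j, Δ k ω) := by
          rw [ht, ht, Finset.sum_Ico_eq_sub _ (by omega : i ≤ j)]; ring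
        rw [hA, hB, abs_neg, abs_neg,
          abs_of_nonneg (Finset.sum_nonneg fun k _ => (hΔpos k ω).le),
          abs_of_nonneg (Finset.sum_nonneg fun k _ => (hΔpos k ω).le),
          Finset.sum_eq_sum_Ico_succ_bot hij, hSe]
        have : ∑ k ∈ Finset.Ico (i+1) j, -(2*α) * Δ k ω
            = -(2*α) * ∑ k ∈ Finset.Ico (i+1) j, Δ k ω := by rw [Finset.mul_sum]
        rw [this]; ring
    have hre : (fun ω => Real.exp (-α * |t (i+1) ω - t j ω| - α * |t i ω - t j ω|))
        = fun ω => ∏ k ∈ insert i S, Real.exp (-(c k) * Δ k ω) := funext hpt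
    rw [hre, expProdAux P Δ hΔmeas hΔpos hiid c hc0, Finset.prod_insert hiS]
    have h1 : ∫ ω, Real.exp (-(c i) * Δ i ω) ∂P = g α := by
      have : c i = α := by simp [hc]
      rw [this, hident']
    have h2 : ∏ k ∈ S, ∫ ω, Real.exp (-(c k) * Δ k ω) ∂P = (g (2*α)) ^ S.card := by
      rw [Finset.prod_congr rfl fun k hk => ?_, Finset.prod_const]
      have hki : k ≠ i := by rintro rfl; exact hiS hk
      rw [show c k = 2*α by simp [hc, hki], hident']
    have hcard : S.card = (if j ≤ i then i - j else j - i - 1) := by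
      by_cases hji : j ≤ i
      · simp [hS, hji, Nat.card_Ico]
      · simp only [hS, hji, ite_false, if_neg, Nat.card_Ico]
        omega
    rw [h1, h2, hcard]
  -- basic facts about q = g (2α)
  have h2α : (0:ℝ) < 2*α := by linarith
  have hq_int : Integrable (fun ω => Real.exp (-(2*α) * Δ 0 ω)) P := by
    refine (integrable_const (1:ℝ)).mono'
      (((hΔmeas 0).const_mul (-(2*α))).exp).aestronglyMeasurable ?_
    filter_upwards with ω
    rw [Real.norm_eq_abs, abs_of_pos (Real.exp_pos _), Real.exp_le_one_iff]
    nlinarith [(hΔpos 0 ω).le]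
  have hq_pos : 0 < g (2*α) := by
    rw [hg]
    exact integral_exp_pos hq_int
  have hq_lt : g (2*α) < 1 := by
    have hdiff : 1 - g (2*α) = ∫ ω, (1 - Real.exp (-(2*α) * Δ 0 ω)) ∂P := by
      rw [integral_sub (integrable_const 1) hq_int, integral_const, hg]
      simp
    have hpos : ∀ ω, 0 < 1 - Real.exp (-(2*α) * Δ 0 ω) := by
      intro ω
      have : Real.exp (-(2*α) * Δ 0 ω) < 1 := by
        rw [Real.exp_lt_one_iff]
        nlinarith [hΔpos 0 ω]
      linarith
    have hint : Integrable (fun ω => 1 - Real.exp (-(2*α) * Δ 0 ω)) P :=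
      (integrable_const 1).sub hq_int
    have : 0 < ∫ ω, (1 - Real.exp (-(2*α) * Δ 0 ω)) ∂P := by
      rw [integral_pos_iff_support_of_nonneg (fun ω => (hpos ω).le) hint]
      have hsupp : (Function.support fun ω => 1 - Real.exp (-(2*α) * Δ 0 ω)) = Set.univ :=
        Set.eq_univ_of_forall fun ω => (hpos ω).ne'
      rw [hsupp]
      simp
    linarith [hdiff ▸ this]
  set q : ℝ := g (2*α) with hqdef
  have h1q : (0:ℝ) < 1 - q := by linarith
  set G : ℕ → ℝ := fun m => ∑ k ∈ Finset.range m, q ^ k with hGdef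
  -- the double sum
  have hsum : ∀ n : ℕ, (∑ i ∈ Finset.Icc 1 (n-1), ∑ j ∈ Finset.Icc 1 n,
        ∫ ω, Real.exp (-α * |t (i+1) ω - t j ω| - α * |t i ω - t j ω|) ∂P)
      = 2 * g α * ∑ i ∈ Finset.Icc 1 (n-1), G i := by
    intro n
    have inner : ∀ i ∈ Finset.Icc 1 (n-1),
        (∑ j ∈ Finset.Icc 1 n,
          ∫ ω, Real.exp (-α * |t (i+1) ω - t j ω| - α * |t i ω - t j ω|) ∂P)
        = g α * (G i + G (n-i)) := by
      intro i hi
      obtain ⟨hi1, hi2⟩ := Finset.mem_Icc.mp hi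
      have hin : i + 1 ≤ n := by omega
      rw [Finset.sum_congr rfl (fun j _ => key i j), ← Finset.Ico_add_one_right_eq_Icc,
        ← Finset.sum_Ico_consecutive
          (fun j => g α * q ^ (if j ≤ i then i - j else j - i - 1))
          (by omega : 1 ≤ i+1) (by omega : i+1 ≤ n+1)]
      have hL : ∑ j ∈ Finset.Ico 1 (i+1), g α * q ^ (if j ≤ i then i - j else j - i - 1)
          = g α * G i := by
        rw [hGdef, Finset.mul_sum]
        refine Finset.sum_nbij' (fun j => i - j) (fun m => i - m) ?_ ?_ ?_ ?_ ?_
        · intro j hj; simp only [Finset.mem_Ico] at hj ⊢; simp only [Finset.mem_range]; omega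
        · intro m hm; simp only [Finset.mem_range] at hm; simp only [Finset.mem_Ico]; omega
        · intro j hj; simp only [Finset.mem_Ico] at hj; omega
        · intro m hm; simp only [Finset.mem_range] at hm; omega
        · intro j hj; simp only [Finset.mem_Ico] at hj
          rw [if_pos (by omega : j ≤ i)]
      have hR : ∑ j ∈ Finset.Ico (i+1) (n+1), g α * q ^ (if j ≤ i then i - j else j - i - 1)
          = g α * G (n-i) := by
        rw [hGdef, Finset.mul_sum]
        refine Finset.sum_nbij' (fun j => j - i - 1) (fun m => m + i + 1) ?_ ?_ ?_ ?_ ?_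
        · intro j hj; simp only [Finset.mem_Ico] at hj; simp only [Finset.mem_range]; omega
        · intro m hm; simp only [Finset.mem_range] at hm; simp only [Finset.mem_Ico]; omega
        · intro j hj; simp only [Finset.mem_Ico] at hj; omega
        · intro m hm; simp only [Finset.mem_range] at hm; omega
        · intro j hj; simp only [Finset.mem_Ico] at hj
          rw [if_neg (by omega)]
      rw [hL, hR]; ring
    rw [Finset.sum_congr rfl inner]
    have hrefl : ∑ i ∈ Finset.Icc 1 (n-1), G (n-i) = ∑ i ∈ Finset.Icc 1 (n-1), G i := by
      refine Finset.sum_nbij' (fun i => n - i) (fun i => n - i) ?_ ?_ ?_ ?_ ?_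
      · intro i hi; simp only [Finset.mem_Icc] at hi ⊢; omega
      · intro i hi; simp only [Finset.mem_Icc] at hi ⊢; omega
      · intro i hi; simp only [Finset.mem_Icc] at hi; omega
      · intro i hi; simp only [Finset.mem_Icc] at hi; omega
      · intro i hi; rfl
    calc ∑ x ∈ Finset.Icc 1 (n-1), g α * (G x + G (n-x))
        = (∑ x ∈ Finset.Icc 1 (n-1), g α * G x)
          + ∑ x ∈ Finset.Icc 1 (n-1), g α * G (n-x) := by
          rw [← Finset.sum_add_distrib]
          exact Finset.sum_congr rfl fun x _ => by ring
      _ = g α * (∑ x ∈ Finset.Icc 1 (n-1), G x)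
          + g α * ∑ x ∈ Finset.Icc 1 (n-1), G (n-x) := by
          rw [Finset.mul_sum, Finset.mul_sum]
      _ = 2 * g α * ∑ i ∈ Finset.Icc 1 (n-1), G i := by rw [hrefl]; ring
  -- rewrite the sequence
  set A : ℝ := 4 * g α / (1 - q) with hAdef
  have hGeq : ∀ m : ℕ, G m = (1 - q ^ m) / (1 - q) := by
    intro m
    simp only [hGdef]
    rw [geom_sum_eq (by linarith : q ≠ 1)]
    rw [div_eq_div_iff (by linarith : q - 1 ≠ 0) (by linarith : 1 - q ≠ 0)]
    ring
  set s : ℕ → ℝ := fun n => ∑ i ∈ Finset.Icc 1 (n-1), q ^ i with hsdef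
  have hfn : ∀ n : ℕ, (2 / (n : ℝ)) *
      (∑ i ∈ Finset.Icc 1 (n-1), ∑ j ∈ Finset.Icc 1 n,
        ∫ ω, Real.exp (-α * |t (i+1) ω - t j ω| - α * |t i ω - t j ω|) ∂P)
      = A * (((n-1 : ℕ) : ℝ) / n) - A * (s n / n) := by
    intro n
    rw [hsum n]
    have : ∑ i ∈ Finset.Icc 1 (n-1), G i = (((n-1:ℕ):ℝ) - s n) / (1 - q) := by
      rw [Finset.sum_congr rfl fun i _ => hGeq i,
        eq_div_iff (by linarith : (1:ℝ) - q ≠ 0), Finset.sum_mul]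
      have hcard : ∑ i ∈ Finset.Icc 1 (n-1), (1:ℝ) = ((n-1:ℕ):ℝ) := by
        rw [Finset.sum_const, Nat.card_Icc]
        simp
      calc ∑ i ∈ Finset.Icc 1 (n-1), (1 - q ^ i) / (1 - q) * (1 - q)
          = ∑ i ∈ Finset.Icc 1 (n-1), (1 - q ^ i) := by
            refine Finset.sum_congr rfl fun i _ => ?_
            field_simp
        _ = ((n-1:ℕ):ℝ) - ∑ i ∈ Finset.Icc 1 (n-1), q ^ i := by
            rw [Finset.sum_sub_distrib, hcard]
        _ = ((n-1:ℕ):ℝ) - s n := by simp only [hsdef]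
    rw [this, hAdef]
    ring
  rw [show (4 * g α + 4 * g α * (g (2 * α) / (1 - g (2 * α)))) = A by
    rw [hAdef, ← hqdef]; field_simp; ring]
  refine Tendsto.congr (fun n => (hfn n).symm) ?_
  have hlim1 : Tendsto (fun n : ℕ => ((n-1 : ℕ) : ℝ) / n) atTop (nhds 1) := by
    have h0 : Tendsto (fun n : ℕ => 1 - 1/(n:ℝ)) atTop (nhds 1) := by
      have := tendsto_one_div_atTop_nhds_zero_nat (𝕜 := ℝ)
      have h := tendsto_const_nhds (x := (1:ℝ)) (f := atTop (α := ℕ)) |>.sub this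
      simpa using h
    refine h0.congr' ?_
    filter_upwards [eventually_ge_atTop 1] with n hn
    rw [Nat.cast_sub hn, Nat.cast_one]
    have hn0 : (n:ℝ) ≠ 0 := Nat.cast_ne_zero.mpr (by omega)
    field_simp
  have hlim2 : Tendsto (fun n : ℕ => s n / n) atTop (nhds 0) := by
    have hbound : ∀ n : ℕ, s n ≤ 1 / (1 - q) := by
      intro n
      have h1 : s n ≤ ∑ i ∈ Finset.range n, q ^ i := by
        simp only [hsdef]
        refine Finset.sum_le_sum_of_subset_of_nonneg ?_
          (fun i _ _ => by positivity)
        intro x hx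
        simp only [Finset.mem_Icc] at hx
        simp only [Finset.mem_range]
        omega
      have h2 : ∑ i ∈ Finset.range n, q ^ i ≤ 1 / (1 - q) := by
        rw [geom_sum_eq (by linarith : q ≠ 1)]
        have he : (q ^ n - 1) / (q - 1) = (1 - q ^ n) / (1 - q) := by
          rw [div_eq_div_iff (by linarith : q - 1 ≠ 0) (by linarith : (1:ℝ) - q ≠ 0)]
          ring
        rw [he]
        refine (div_le_div_iff_of_pos_right h1q).mpr ?_
        nlinarith [pow_nonneg hq_pos.le n]
      linarith
    have hs_nonneg : ∀ n : ℕ, 0 ≤ s n := by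
      intro n
      simp only [hsdef]
      exact Finset.sum_nonneg fun i _ => by positivity
    refine squeeze_zero (g := fun n : ℕ => 1/(1-q) * (1/(n:ℝ))) (fun n => div_nonneg (hs_nonneg n) (Nat.cast_nonneg n))
      (fun n => ?_) ?_
    · show s n / (n:ℝ) ≤ 1 / (1 - q) * (1 / (n:ℝ))
      rw [div_eq_mul_one_div]
      exact mul_le_mul_of_nonneg_right (hbound n) (by positivity)
    · have := tendsto_one_div_atTop_nhds_zero_nat.const_mul (1/(1-q))
      simpa using this
  have := (tendsto_const_nhds (x := A) (f := atTop (α := ℕ))).mul hlim1 |>.sub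
    ((tendsto_const_nhds (x := A) (f := atTop (α := ℕ))).mul hlim2)
  simpa using this
end

section
/- (Proposition 2, bias) Define the second-order expansion ĝ_n = g + (T_n - ηg)/η - g(V_n - η)/η + g(V_n - η)²/η² - (T_n - ηg)(V_n - η)/η². Then lim_{n→∞} n (E[ĝ_n] - g) = -3g. -/
open MeasureTheory ProbabilityTheory Filter

/-- The covariance `Cov(X, Y) = E[(X - E X)(Y - E Y)]`. -/
noncomputable def cov {Ω : Type*} [MeasurableSpace Ω] (P : Measure Ω) (X Y : Ω → ℝ) : ℝ :=
  ∫ ω, (X ω - ∫ ω', X ω' ∂P) * (Y ω - ∫ ω', Y ω' ∂P) ∂P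

/-- Proposition 2, bias: Given square-integrable `T_n, V_n` with
`E[T_n] = (1 - 1/n) η g`, `E[V_n] = η`, `n Var(V_n) → η²(2 + 4K)` and
`n Cov(T_n, V_n) → η²(4g + 4gK)`, the second-order expansion
`ĝ_n = g + (T_n - ηg)/η - g(V_n - η)/η + g(V_n - η)²/η² - (T_n - ηg)(V_n - η)/η²`
satisfies `lim_{n→∞} n (E[ĝ_n] - g) = -3g`. -/
theorem bias_of_ratio_estimator_expansion
    {Ω : Type*} [MeasurableSpace Ω] (P : Measure Ω) [IsProbabilityMeasure P]
    (η g K : ℝ) (hη : 0 < η) (hg0 : 0 < g) (hg1 : g < 1) (hK : 0 ≤ K)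
    (T V : ℕ → Ω → ℝ)
    (hT2 : ∀ n, MemLp (T n) 2 P) (hV2 : ∀ n, MemLp (V n) 2 P)
    (hET : ∀ n : ℕ, 2 ≤ n → (∫ ω, T n ω ∂P) = (1 - 1 / (n : ℝ)) * η * g)
    (hEV : ∀ n : ℕ, 1 ≤ n → (∫ ω, V n ω ∂P) = η)
    (hVarV : Tendsto (fun n : ℕ => (n : ℝ) * variance (V n) P) atTop
      (nhds (η ^ 2 * (2 + 4 * K))))
    (hCovTV : Tendsto (fun n : ℕ => (n : ℝ) * cov P (T n) (V n)) atTop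
      (nhds (η ^ 2 * (4 * g + 4 * g * K)))) :
    Tendsto (fun n : ℕ => (n : ℝ) *
        ((∫ ω, (g + (T n ω - η * g) / η - g * (V n ω - η) / η
            + g * (V n ω - η) ^ 2 / η ^ 2
            - (T n ω - η * g) * (V n ω - η) / η ^ 2) ∂P) - g))
      atTop (nhds (-3 * g)) := by
  have hη' : (η : ℝ) ≠ 0 := ne_of_gt hη
  -- the key exact expression for the prelimit, valid for n ≥ 2
  have key : ∀ n : ℕ, 2 ≤ n →
      (n : ℝ) * ((∫ ω, (g + (T n ω - η * g) / η - g * (V n ω - η) / η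
            + g * (V n ω - η) ^ 2 / η ^ 2
            - (T n ω - η * g) * (V n ω - η) / η ^ 2) ∂P) - g)
      = -g + (g / η ^ 2) * ((n : ℝ) * variance (V n) P)
          - (1 / η ^ 2) * ((n : ℝ) * cov P (T n) (V n)) := by
    intro n hn
    have hn1 : 1 ≤ n := le_trans (by norm_num) hn
    have hn0 : (n : ℝ) ≠ 0 := Nat.cast_ne_zero.mpr (by omega)
    have hTi : Integrable (T n) P := (hT2 n).integrable one_le_two
    have hVi : Integrable (V n) P := (hV2 n).integrable one_le_two
    have hVc : MemLp (fun ω => V n ω - η) 2 P := (hV2 n).sub (memLp_const η)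
    have hTc : MemLp (fun ω => T n ω - η * g) 2 P := (hT2 n).sub (memLp_const (η * g))
    have hsq : Integrable (fun ω => (V n ω - η) ^ 2) P := by
      have := memLp_one_iff_integrable.mp
        (hVc.smul (p := 2) (q := 2) (r := 1) hVc)
      simpa [smul_eq_mul, sq, Pi.mul_def] using this
    have hprod : Integrable (fun ω => (T n ω - η * g) * (V n ω - η)) P := by
      have := memLp_one_iff_integrable.mp
        (hVc.smul (p := 2) (q := 2) (r := 1) hTc)
      simpa [smul_eq_mul, mul_comm, Pi.mul_def] using this
    -- integrability of each summand
    have i1 : Integrable (fun ω => (T n ω - η * g) / η) P :=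
      (hTi.sub (integrable_const _)).div_const η
    have i2 : Integrable (fun ω => g * (V n ω - η) / η) P :=
      (((hVi.sub (integrable_const _)).const_mul g)).div_const η
    have i3 : Integrable (fun ω => g * (V n ω - η) ^ 2 / η ^ 2) P :=
      ((hsq.const_mul g)).div_const (η ^ 2)
    have i4 : Integrable (fun ω => (T n ω - η * g) * (V n ω - η) / η ^ 2) P :=
      hprod.div_const (η ^ 2)
    -- split the integral
    have hsplit : (∫ ω, (g + (T n ω - η * g) / η - g * (V n ω - η) / η
            + g * (V n ω - η) ^ 2 / η ^ 2
            - (T n ω - η * g) * (V n ω - η) / η ^ 2) ∂P)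
        = g + (∫ ω, (T n ω - η * g) ∂P) / η - g * (∫ ω, (V n ω - η) ∂P) / η
          + g * (∫ ω, (V n ω - η) ^ 2 ∂P) / η ^ 2
          - (∫ ω, (T n ω - η * g) * (V n ω - η) ∂P) / η ^ 2 := by
      rw [integral_sub (by exact ((((integrable_const g).add i1).sub i2).add i3)) i4,
        integral_add (by exact (((integrable_const g).add i1).sub i2)) i3,
        integral_sub (by exact ((integrable_const g).add i1)) i2,
        integral_add (integrable_const g) i1, integral_const]
      simp only [measure_univ, probReal_univ, ENNReal.toReal_one, one_smul, smul_eq_mul, one_mul]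
      rw [integral_div, integral_div, integral_div, integral_div,
        integral_const_mul, integral_const_mul]
    have hEVn := hEV n hn1
    have hETn := hET n hn
    have e1 : (∫ ω, (T n ω - η * g) ∂P) = -(η * g) / n := by
      rw [integral_sub hTi (integrable_const _), integral_const, hETn]
      simp [measure_univ]
      field_simp
      ring
    have e2 : (∫ ω, (V n ω - η) ∂P) = 0 := by
      rw [integral_sub hVi (integrable_const _), integral_const, hEVn]
      simp [measure_univ]
    have e3 : (∫ ω, (V n ω - η) ^ 2 ∂P) = variance (V n) P := by
      rw [variance_eq_integral (hV2 n).aestronglyMeasurable.aemeasurable]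
      rw [hEVn]
    have e4 : (∫ ω, (T n ω - η * g) * (V n ω - η) ∂P) = cov P (T n) (V n) := by
      have hpt : ∀ ω, (T n ω - η * g) * (V n ω - η)
          = (T n ω - ∫ ω', T n ω' ∂P) * (V n ω - ∫ ω', V n ω' ∂P)
            + ((∫ ω', T n ω' ∂P) - η * g) * (V n ω - η) := by
        intro ω
        rw [hEVn]
        ring
      have hcovi : Integrable
          (fun ω => (T n ω - ∫ ω', T n ω' ∂P) * (V n ω - ∫ ω', V n ω' ∂P)) P := by
        have hTc' : MemLp (fun ω => T n ω - ∫ ω', T n ω' ∂P) 2 P :=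
          (hT2 n).sub (memLp_const _)
        have hVc' : MemLp (fun ω => V n ω - ∫ ω', V n ω' ∂P) 2 P :=
          (hV2 n).sub (memLp_const _)
        have := memLp_one_iff_integrable.mp
          (hVc'.smul (p := 2) (q := 2) (r := 1) hTc')
        simpa [smul_eq_mul, mul_comm, Pi.mul_def] using this
      calc (∫ ω, (T n ω - η * g) * (V n ω - η) ∂P)
          = ∫ ω, ((T n ω - ∫ ω', T n ω' ∂P) * (V n ω - ∫ ω', V n ω' ∂P)
            + ((∫ ω', T n ω' ∂P) - η * g) * (V n ω - η)) ∂P := by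
            exact integral_congr_ae (Filter.Eventually.of_forall hpt)
        _ = cov P (T n) (V n) + ((∫ ω', T n ω' ∂P) - η * g) * (∫ ω, (V n ω - η) ∂P) := by
            have hlin : Integrable
                (fun ω => ((∫ ω', T n ω' ∂P) - η * g) * (V n ω - η)) P := by
              exact (hVi.sub (integrable_const _)).const_mul _
            rw [integral_add hcovi hlin, integral_const_mul]
            rfl
        _ = cov P (T n) (V n) := by rw [e2]; ring
    rw [hsplit, e1, e2, e3, e4]
    field_simp
    ring
  -- limit of the right-hand side
  have hlim : Tendsto (fun n : ℕ => -g + (g / η ^ 2) * ((n : ℝ) * variance (V n) P)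
      - (1 / η ^ 2) * ((n : ℝ) * cov P (T n) (V n))) atTop (nhds (-3 * g)) := by
    have := ((tendsto_const_nhds : Tendsto (fun _ : ℕ => -g) atTop (nhds (-g))).add
      (hVarV.const_mul (g / η ^ 2))).sub (hCovTV.const_mul (1 / η ^ 2))
    convert this using 2
    field_simp
    ring
  refine hlim.congr' ?_
  filter_upwards [eventually_ge_atTop 2] with n hn
  exact (key n hn).symm
end

section
/- (Section 4, asymptotic bias for exponential sampling) Let α, β > 0 and let g : (0,∞) → ℝ be given by g(x) = β/(β + x). Then g is twice differentiable with g'(x) = -β/(β+x)² and g''(x) = 2β/(β+x)³, and the asymptotic bias expression of Theorem 1 evaluates to -3g(α)/g'(α) - g''(α)(1 + g(2α) - 2g(α)²)/(2 g'(α)³) = (β + α)(2α³ + 3β³ + 8αβ² + 6α²β)/(β²(β + 2α)). -/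
/-- Section 4, asymptotic bias for exponential sampling: For
`g x = β/(β + x)` with `α, β > 0`, `g` is twice differentiable on `(0,∞)` with
`g' x = -β/(β+x)²` and `g'' x = 2β/(β+x)³`, and the asymptotic bias expression of
Theorem 1 evaluates to
`-3g(α)/g'(α) - g''(α)(1 + g(2α) - 2g(α)²)/(2 g'(α)³)
  = (β + α)(2α³ + 3β³ + 8αβ² + 6α²β)/(β²(β + 2α))`. -/
theorem asymptotic_bias_exponential_sampling
    (α β : ℝ) (hα : 0 < α) (hβ : 0 < β)
    (g g' g'' : ℝ → ℝ)
    (hg : ∀ x, g x = β / (β + x))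
    (hg' : ∀ x, g' x = -β / (β + x) ^ 2)
    (hg'' : ∀ x, g'' x = 2 * β / (β + x) ^ 3) :
    (∀ x : ℝ, 0 < x → HasDerivAt g (g' x) x ∧ HasDerivAt g' (g'' x) x) ∧
    -3 * g α / g' α - g'' α * (1 + g (2 * α) - 2 * (g α) ^ 2) / (2 * (g' α) ^ 3)
      = (β + α) * (2 * α ^ 3 + 3 * β ^ 3 + 8 * α * β ^ 2 + 6 * α ^ 2 * β)
          / (β ^ 2 * (β + 2 * α)) := by
  constructor
  · intro x hx
    have hbx : β + x ≠ 0 := by positivity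
    constructor
    · have h1 : HasDerivAt (fun y : ℝ => β + y) 1 x := by
        simpa using (hasDerivAt_id x).const_add β
      have h2 : HasDerivAt (fun y : ℝ => β / (β + y))
          (((0:ℝ) * (β + x) - β * 1) / (β + x) ^ 2) x :=
        (hasDerivAt_const x β).div h1 hbx
      have : HasDerivAt g (((0:ℝ) * (β + x) - β * 1) / (β + x) ^ 2) x := by
        refine h2.congr_of_eventuallyEq ?_
        filter_upwards with y using (hg y)
      rw [hg' x]
      convert this using 1
      field_simp
      ring
    · have h1 : HasDerivAt (fun y : ℝ => (β + y) ^ 2) (2 * (β + x)) x := by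
        have := ((hasDerivAt_id x).const_add β).fun_pow 2
        simpa [mul_comm] using this
      have hsq : (β + x) ^ 2 ≠ 0 := pow_ne_zero _ hbx
      have h2 : HasDerivAt (fun y : ℝ => -β / (β + y) ^ 2)
          (((0:ℝ) * (β + x) ^ 2 - -β * (2 * (β + x))) / ((β + x) ^ 2) ^ 2) x :=
        (hasDerivAt_const x (-β)).div h1 hsq
      have h3 : HasDerivAt g' (((0:ℝ) * (β + x) ^ 2 - -β * (2 * (β + x))) / ((β + x) ^ 2) ^ 2) x := by
        refine h2.congr_of_eventuallyEq ?_
        filter_upwards with y using (hg' y)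
      rw [hg'' x]
      convert h3 using 1
      field_simp
      ring
  · have hba : β + α ≠ 0 := by positivity
    have hb2a : β + 2 * α ≠ 0 := by positivity
    have hβ' : β ≠ 0 := hβ.ne'
    rw [hg, hg, hg', hg'']
    rw [show (-β / (β + α) ^ 2) ^ 3 = -(β ^ 3 / (β + α) ^ 6) by field_simp]
    field_simp
    ring
end
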